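/- For a random walk 𝒜_n with i.i.d. nonnegative increments A_k having E[A_1] < c for some c > 0, the probability that ∃n ≥ 1 with 𝒜_n > x + cn tends to 0 as x → ∞. -/

import Mathlib

open MeasureTheory ProbabilityTheory Filter Topology

/-- For i.i.d. nonnegative increments with mean less than `c`, the probability that
the walk ever crosses the linear barrier `x + c n` tends to `0` as `x → ∞`. -/
theorem crossing_linear_barrier_tendsto_zero {Ω : Type*} [MeasurableSpace Ω]
    (μ : Measure Ω) [IsProbabilityMeasure μ] (A : ℕ → Ω → ℝ) (c : ℝ)
    (hmeas : ∀ i, Measurable (A i)) (hnonneg : ∀ i ω, 0 ≤ A i ω)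
    (hindep : iIndepFun A μ)
    (hident : ∀ i, IdentDistrib (A i) (A 0) μ μ)
    (hint : Integrable (A 0) μ) (hmean : ∫ ω, A 0 ω ∂μ < c) :
    Tendsto (fun x : ℝ =>
        (μ {ω | ∃ n, 1 ≤ n ∧ x + c * n < ∑ k ∈ Finset.range n, A k ω}).toReal)
      atTop (nhds 0) := by
  set S : ℕ → Ω → ℝ := fun n ω => ∑ k ∈ Finset.range n, A k ω with hSdef
  have hSmeas : ∀ n, Measurable (S n) := fun n =>
    Finset.measurable_sum _ fun i _ => hmeas i
  set E : ℝ → Set Ω := fun x => {ω | ∃ n, 1 ≤ n ∧ x + c * n < S n ω} with hEdef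
  have hc : 0 < c := lt_of_le_of_lt (integral_nonneg fun ω => hnonneg 0 ω) hmean
  have hSmono : ∀ ω, ∀ {m n : ℕ}, m ≤ n → S m ω ≤ S n ω := by
    intro ω m n hmn
    exact Finset.sum_le_sum_of_subset_of_nonneg (Finset.range_mono hmn)
      (fun i _ _ => hnonneg i ω)
  have hEmeas : ∀ x, MeasurableSet (E x) := by
    intro x
    have : E x = ⋃ n, ({ω | 1 ≤ n} ∩ {ω | x + c * n < S n ω}) := by
      ext ω; simp [hEdef, Set.mem_iUnion]
    rw [this]
    exact MeasurableSet.iUnion fun n =>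
      (MeasurableSet.const _).inter (measurableSet_lt measurable_const (hSmeas n))
  have hEanti : Antitone E := by
    intro x y hxy ω hω
    obtain ⟨n, hn1, hn⟩ := hω
    exact ⟨n, hn1, lt_of_le_of_lt (by linarith) hn⟩
  -- the intersection over integer levels is null
  have hnull : μ (⋂ m : ℕ, E m) = 0 := by
    rw [measure_eq_zero_iff_ae_notMem]
    have hslln := strong_law_ae_real A hint
      (fun i j hij => hindep.indepFun hij) hident
    filter_upwards [hslln] with ω hω
    -- eventually S n ω / n < c
    have hev : ∀ᶠ n : ℕ in atTop, S n ω / n < c :=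
      hω.eventually (Filter.Tendsto.eventually_lt_const hmean tendsto_id)
    obtain ⟨N, hN⟩ := hev.exists_forall_of_atTop
    intro hmem
    rw [Set.mem_iInter] at hmem
    obtain ⟨m, hm⟩ := exists_nat_ge (S N ω)
    obtain ⟨n, hn1, hn⟩ := hmem m
    rcases le_or_gt N n with h | h
    · have hdiv := hN n h
      have hnpos : (0:ℝ) < n := by exact_mod_cast hn1
      have : S n ω < c * n := by
        have := (div_lt_iff₀ hnpos).mp hdiv
        linarith
      have hm0 : (0:ℝ) ≤ m := Nat.cast_nonneg m
      linarith
    · have h1 : S n ω ≤ S N ω := hSmono ω h.le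
      have h2 : (0:ℝ) ≤ c * n := by positivity
      linarith
  have hnat : Tendsto (fun m : ℕ => μ (E m)) atTop (𝓝 0) := by
    have := tendsto_measure_iInter_atTop (μ := μ)
      (s := fun m : ℕ => E m)
      (fun m => (hEmeas m).nullMeasurableSet)
      (fun a b hab => hEanti (by exact_mod_cast hab))
      ⟨0, measure_ne_top μ _⟩
    rwa [hnull] at this
  have hnatReal : Tendsto (fun m : ℕ => (μ (E m)).toReal) atTop (𝓝 0) := by
    have := (ENNReal.tendsto_toReal (by simp)).comp hnat
    exact this
  -- squeeze
  have hg : Tendsto (fun x : ℝ => (μ (E ⌊x⌋₊)).toReal) atTop (𝓝 0) :=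
    hnatReal.comp tendsto_nat_floor_atTop
  apply squeeze_zero' (Eventually.of_forall fun x => ENNReal.toReal_nonneg) _ hg
  filter_upwards [eventually_ge_atTop (0:ℝ)] with x hx
  have hsub : E x ⊆ E ⌊x⌋₊ := hEanti (Nat.floor_le hx)
  exact ENNReal.toReal_mono (measure_ne_top μ _) (measure_mono hsub)
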